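/- Let X ~ N(0,1), U_Y with E[U_Y] = 0, independent. For Y = -3ZX + U_Y, the functional intervention Z = aX with a ≥ 0 constrained so that |aX| has expectation budget E[|aX|] ≤ B (a cost constraint) yields optimal target effect E[Y] = -3a* where a* = B/E[|X|] = B·√(π/2). In contrast, any hard intervention Z = z with cost |z| ≤ B yields E[Y] = 0. Hence under equal budget B > 0, the best functional intervention strictly outperforms every budget-feasible hard intervention. -/

import Mathlib

open MeasureTheory ProbabilityTheory Real
open Set Filter

lemma exp_rw : ∀ x : ℝ, Real.exp (-x^2/2) = Real.exp (-(1/2:ℝ) * x^2) := by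
  intro x; ring_nf

lemma int_exp : Integrable (fun x : ℝ => Real.exp (-x^2/2)) := by
  simp_rw [exp_rw]; exact integrable_exp_neg_mul_sq (by norm_num)

lemma int_xexp : Integrable (fun x : ℝ => x * Real.exp (-x^2/2)) := by
  simp_rw [exp_rw]; exact integrable_mul_exp_neg_mul_sq (by norm_num)


lemma val_exp : ∫ x : ℝ, Real.exp (-x^2/2) = Real.sqrt (2 * Real.pi) := by
  simp_rw [exp_rw]; rw [integral_gaussian]; congr 1; field_simp

lemma val_xexp : ∫ x : ℝ, x * Real.exp (-x^2/2) = 0 := by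
  have h := (Measure.measurePreserving_neg (volume : Measure ℝ)).integral_comp
    (Homeomorph.neg ℝ).measurableEmbedding (fun x : ℝ => x * Real.exp (-x^2/2))
  have h2 : ∫ x : ℝ, (-x) * Real.exp (-(-x)^2/2) = - ∫ x : ℝ, x * Real.exp (-x^2/2) := by
    rw [← integral_neg]; congr 1; ext x; ring_nf
  rw [h2] at h
  linarith

lemma int_x2exp : Integrable (fun x : ℝ => x^2 * Real.exp (-x^2/2)) := by
  have h := integrable_rpow_mul_exp_neg_mul_sq (b := (1/2:ℝ)) (by norm_num) (s := 2) (by norm_num)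
  have e : (fun x : ℝ => x^2 * Real.exp (-x^2/2))
      = fun x => x ^ (2:ℝ) * Real.exp (-(1/2:ℝ) * x^2) := by
    funext x
    rw [show ((2:ℝ) = ((2:ℕ):ℝ)) by norm_num, Real.rpow_natCast]
    ring_nf
  rw [e]; exact h

lemma tend_exp : Tendsto (fun x : ℝ => Real.exp (-x^2/2)) atTop (nhds 0) := by
  simp_rw [exp_rw]
  exact Real.tendsto_exp_atBot.comp
    ((tendsto_pow_atTop two_ne_zero).const_mul_atTop_of_neg (by norm_num))

lemma val_xexp_Ioi : ∫ x in Ioi (0:ℝ), x * Real.exp (-x^2/2) = 1 := by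
  have hderiv : ∀ x ∈ Ici (0:ℝ), HasDerivAt (fun x : ℝ => -Real.exp (-x^2/2))
      (x * Real.exp (-x^2/2)) x := by
    intro x _
    have h1 : HasDerivAt (fun x : ℝ => -x^2/2) (-x) x := by
      have h0 := ((hasDerivAt_pow 2 x).div_const 2).fun_neg
      have e : -((2:ℕ) * x ^ (2-1) / 2) = -x := by push_cast; ring
      rw [e] at h0
      simpa [neg_div] using h0
    have := (h1.exp).fun_neg
    exact this.congr_deriv (by ring)
  have := integral_Ioi_of_hasDerivAt_of_tendsto' hderiv int_xexp.integrableOn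
    (tend_exp.neg)
  simpa using this

lemma tend_xexp : Tendsto (fun x : ℝ => x * Real.exp (-x^2/2)) atTop (nhds 0) := by
  have h := ((rpow_mul_exp_neg_mul_sq_isLittleO_exp_neg (b := (1/2:ℝ)) (by norm_num) 1).isBigO.trans_tendsto
    (Real.tendsto_exp_atBot.comp ((tendsto_id (α := ℝ)).const_mul_atTop_of_neg (by norm_num))))
  have e : (fun x : ℝ => x ^ (1:ℝ) * Real.exp (-(1/2:ℝ) * x^2)) =ᶠ[atTop] fun x => x * Real.exp (-x^2/2) := by
    filter_upwards [eventually_gt_atTop (0:ℝ)] with x hx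
    rw [Real.rpow_one]; ring_nf
  exact h.congr' e

lemma val_x2exp_Ioi : ∫ x in Ioi (0:ℝ), x^2 * Real.exp (-x^2/2)
    = ∫ x in Ioi (0:ℝ), Real.exp (-x^2/2) := by
  have hderiv : ∀ x ∈ Ici (0:ℝ), HasDerivAt (fun x : ℝ => -(x * Real.exp (-x^2/2)))
      (x^2 * Real.exp (-x^2/2) - Real.exp (-x^2/2)) x := by
    intro x _
    have h1 : HasDerivAt (fun x : ℝ => -x^2/2) (-x) x := by
      have h0 := ((hasDerivAt_pow 2 x).div_const 2).fun_neg
      have e : -((2:ℕ) * x ^ (2-1) / 2) = -x := by push_cast; ring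
      rw [e] at h0
      simpa [neg_div] using h0
    have := ((hasDerivAt_id x).fun_mul h1.exp).fun_neg
    exact this.congr_deriv (by simp only [id]; ring)
  have hint : IntegrableOn (fun x : ℝ => x^2 * Real.exp (-x^2/2) - Real.exp (-x^2/2)) (Ioi 0) :=
    (int_x2exp.sub int_exp).integrableOn
  have h := integral_Ioi_of_hasDerivAt_of_tendsto' hderiv hint tend_xexp.neg
  simp only [mul_zero, zero_mul, neg_zero, Real.exp_zero, sub_zero] at h
  rw [integral_sub int_x2exp.integrableOn int_exp.integrableOn] at h
  linarith [h]

lemma val_exp_Ioi : ∫ x in Ioi (0:ℝ), Real.exp (-x^2/2) = Real.sqrt (2 * Real.pi) / 2 := by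
  have h := integral_comp_abs (f := fun t : ℝ => Real.exp (-t^2/2))
  simp only [sq_abs] at h
  rw [val_exp] at h
  linarith

lemma val_absxexp : ∫ x : ℝ, |x| * Real.exp (-x^2/2) = 2 := by
  have h := integral_comp_abs (f := fun t : ℝ => t * Real.exp (-t^2/2))
  simp only [sq_abs] at h
  rw [val_xexp_Ioi] at h
  simpa using h

lemma int_absxexp : Integrable (fun x : ℝ => |x| * Real.exp (-x^2/2)) := by
  simpa [abs_mul, abs_of_nonneg (Real.exp_pos _).le] using int_xexp.abs

lemma val_x2exp : ∫ x : ℝ, x^2 * Real.exp (-x^2/2) = Real.sqrt (2 * Real.pi) := by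
  have h := integral_comp_abs (f := fun t : ℝ => t^2 * Real.exp (-t^2/2))
  simp only [sq_abs] at h
  rw [val_x2exp_Ioi, val_exp_Ioi] at h
  rw [h]; ring

open scoped NNReal ENNReal

lemma pdf01 (x : ℝ) : gaussianPDFReal 0 1 x
    = (Real.sqrt (2 * Real.pi))⁻¹ * Real.exp (-x^2/2) := by
  simp [gaussianPDFReal]

lemma g01_integral (g : ℝ → ℝ) :
    ∫ x, g x ∂(gaussianReal 0 1) = ∫ x, gaussianPDFReal 0 1 x * g x := by
  rw [gaussianReal_of_var_ne_zero 0 one_ne_zero]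
  have e : gaussianPDF 0 1 = fun x => ((Real.toNNReal (gaussianPDFReal 0 1 x) : ℝ≥0) : ℝ≥0∞) := rfl
  rw [e, integral_withDensity_eq_integral_smul ((measurable_gaussianPDFReal 0 1).real_toNNReal)]
  congr 1; funext x
  rw [NNReal.smul_def, smul_eq_mul, Real.coe_toNNReal _ (gaussianPDFReal_nonneg 0 1 x)]

lemma g01_integrable (g : ℝ → ℝ)
    (h : Integrable (fun x => gaussianPDFReal 0 1 x * g x)) :
    Integrable g (gaussianReal 0 1) := by
  rw [gaussianReal_of_var_ne_zero 0 one_ne_zero]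
  have e : gaussianPDF 0 1 = fun x => ((Real.toNNReal (gaussianPDFReal 0 1 x) : ℝ≥0) : ℝ≥0∞) := rfl
  rw [e, integrable_withDensity_iff_integrable_coe_smul
    ((measurable_gaussianPDFReal 0 1).real_toNNReal)]
  have e2 : (fun x => ((Real.toNNReal (gaussianPDFReal 0 1 x) : ℝ≥0) : ℝ) • g x)
      = fun x => gaussianPDFReal 0 1 x * g x := by
    funext x
    rw [smul_eq_mul, Real.coe_toNNReal _ (gaussianPDFReal_nonneg 0 1 x)]
  rw [e2]; exact h

lemma sqrt2pi_pos : (0:ℝ) < Real.sqrt (2 * Real.pi) :=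
  Real.sqrt_pos.mpr (by positivity)

lemma g01_int_id : Integrable (fun x : ℝ => x) (gaussianReal 0 1) := by
  refine g01_integrable _ ?_
  have h := int_xexp.const_mul (Real.sqrt (2 * Real.pi))⁻¹
  refine h.congr (Filter.Eventually.of_forall fun x => ?_)
  simp only []
  rw [pdf01]; ring

lemma g01_val_id : ∫ x, x ∂(gaussianReal 0 1) = 0 := by
  rw [g01_integral]
  have : ∫ x, gaussianPDFReal 0 1 x * x
      = (Real.sqrt (2 * Real.pi))⁻¹ * ∫ x, x * Real.exp (-x^2/2) := by
    rw [← integral_const_mul]; congr 1; funext x; rw [pdf01]; ring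
  rw [this, val_xexp, mul_zero]

lemma g01_int_abs : Integrable (fun x : ℝ => |x|) (gaussianReal 0 1) := by
  refine g01_integrable _ ?_
  have h := int_absxexp.const_mul (Real.sqrt (2 * Real.pi))⁻¹
  refine h.congr (Filter.Eventually.of_forall fun x => ?_)
  simp only []
  rw [pdf01]; ring

lemma g01_val_abs : ∫ x, |x| ∂(gaussianReal 0 1) = Real.sqrt (2 / Real.pi) := by
  rw [g01_integral]
  have h1 : ∫ x, gaussianPDFReal 0 1 x * |x|
      = (Real.sqrt (2 * Real.pi))⁻¹ * ∫ x, |x| * Real.exp (-x^2/2) := by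
    rw [← integral_const_mul]; congr 1; funext x; rw [pdf01]; ring
  rw [h1, val_absxexp]
  have h2 : Real.sqrt (2 / Real.pi) = 2 / Real.sqrt (2 * Real.pi) := by
    rw [show (2:ℝ) / Real.pi = (2 / Real.sqrt (2 * Real.pi))^2 by
      rw [div_pow, Real.sq_sqrt (by positivity)]; field_simp]
    exact Real.sqrt_sq (by positivity)
  rw [h2]; field_simp

lemma g01_int_sq : Integrable (fun x : ℝ => x * x) (gaussianReal 0 1) := by
  refine g01_integrable _ ?_
  have h := int_x2exp.const_mul (Real.sqrt (2 * Real.pi))⁻¹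
  refine h.congr (Filter.Eventually.of_forall fun x => ?_)
  simp only []
  rw [pdf01]; ring

lemma g01_val_sq : ∫ x, x * x ∂(gaussianReal 0 1) = 1 := by
  rw [g01_integral]
  have h1 : ∫ x, gaussianPDFReal 0 1 x * (x * x)
      = (Real.sqrt (2 * Real.pi))⁻¹ * ∫ x, x^2 * Real.exp (-x^2/2) := by
    rw [← integral_const_mul]; congr 1; funext x; rw [pdf01]; ring
  rw [h1, val_x2exp, inv_mul_cancel₀ (ne_of_gt sqrt2pi_pos)]


/-- For X ~ N(0,1) independent of U_Y with E[U_Y] = 0 and outcome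
Y = -3ZX + U_Y: among functional interventions Z = aX with a ≥ 0 under the budget
constraint E[|aX|] ≤ B, the optimal target effect is -3a* with a* = B·√(π/2)
(it is the least achievable value, attained within budget); every budget-feasible
hard intervention Z = z (|z| ≤ B) yields E[Y] = 0; hence for B > 0 the best
functional intervention strictly outperforms every budget-feasible hard one. -/
theorem stmt16 {Ω : Type*} [MeasurableSpace Ω] (P : Measure Ω) [IsProbabilityMeasure P]
    (X UY : Ω → ℝ)
    (hInd : IndepFun X UY P)
    (hX : P.map X = gaussianReal 0 1)
    (hUYint : Integrable UY P)
    (hUYmean : ∫ ω, UY ω ∂P = 0)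
    (B : ℝ) (hB : 0 < B) :
    IsLeast {e : ℝ | ∃ a : ℝ, 0 ≤ a ∧ (∫ ω, |a * X ω| ∂P) ≤ B ∧
        e = ∫ ω, (-3 * (a * X ω) * X ω + UY ω) ∂P}
      (-3 * (B * Real.sqrt (Real.pi / 2))) ∧
    (∀ z : ℝ, |z| ≤ B → ∫ ω, (-3 * z * X ω + UY ω) ∂P = 0) ∧
    -3 * (B * Real.sqrt (Real.pi / 2)) < 0 := by
  have hXm : AEMeasurable X P :=
    aemeasurable_of_map_neZero (by rw [hX]; exact ⟨IsProbabilityMeasure.ne_zero _⟩)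
  have key : ∀ f : ℝ → ℝ, Measurable f → Integrable f (gaussianReal 0 1) →
      Integrable (fun ω => f (X ω)) P ∧
        ∫ ω, f (X ω) ∂P = ∫ x, f x ∂(gaussianReal 0 1) := by
    intro f hf hfi
    have hsm : AEStronglyMeasurable f (P.map X) := hf.aestronglyMeasurable
    refine ⟨(integrable_map_measure hsm hXm).mp (by rwa [hX]), ?_⟩
    rw [← integral_map hXm hsm, hX]
  obtain ⟨intX, valX⟩ := key (fun x => x) measurable_id g01_int_id
  obtain ⟨intAbsX, valAbsX⟩ := key (fun x => |x|) (measurable_id.abs) g01_int_abs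
  obtain ⟨intSqX, valSqX⟩ := key (fun x => x * x) (measurable_id.mul measurable_id) g01_int_sq
  rw [g01_val_id] at valX
  rw [g01_val_abs] at valAbsX
  rw [g01_val_sq] at valSqX
  set c := Real.sqrt (Real.pi / 2) with hc_def
  have hc : 0 < c := Real.sqrt_pos.mpr (by positivity)
  have hcc : Real.sqrt (2 / Real.pi) * c = 1 := by
    rw [hc_def, ← Real.sqrt_mul (by positivity)]
    rw [show (2 / Real.pi) * (Real.pi / 2) = 1 by field_simp]
    exact Real.sqrt_one
  -- value formula
  have hval : ∀ a : ℝ, ∫ ω, (-3 * (a * X ω) * X ω + UY ω) ∂P = -3 * a := by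
    intro a
    have h1 : (fun ω => -3 * (a * X ω) * X ω) = fun ω => (-3 * a) * (X ω * X ω) := by
      funext ω; ring
    rw [integral_add (by rw [h1]; exact intSqX.const_mul _) hUYint, hUYmean, add_zero,
      h1, integral_const_mul, valSqX, mul_one]
  -- cost formula
  have hcost : ∀ a : ℝ, 0 ≤ a → ∫ ω, |a * X ω| ∂P = a * Real.sqrt (2 / Real.pi) := by
    intro a ha
    have h1 : (fun ω => |a * X ω|) = fun ω => a * |X ω| := by
      funext ω; rw [abs_mul, abs_of_nonneg ha]
    rw [h1, integral_const_mul, valAbsX]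
  refine ⟨⟨⟨B * c, by positivity, ?_, (hval _).symm⟩, ?_⟩, ?_, ?_⟩
  · rw [hcost _ (by positivity)]
    calc B * c * Real.sqrt (2 / Real.pi) = B * (Real.sqrt (2 / Real.pi) * c) := by ring
      _ = B := by rw [hcc, mul_one]
      _ ≤ B := le_refl B
  · rintro e ⟨a, ha0, hca, rfl⟩
    rw [hval a, hcost a ha0] at *
    have h2 := mul_le_mul_of_nonneg_right hca hc.le
    have h3 : a * Real.sqrt (2 / Real.pi) * c = a := by
      rw [mul_assoc, hcc, mul_one]
    rw [h3] at h2
    linarith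
  · intro z hz
    have h1 : (fun ω => -3 * z * X ω + UY ω) = fun ω => (-3 * z) * X ω + UY ω := by
      funext ω; ring
    rw [h1, integral_add (intX.const_mul _) hUYint, hUYmean, add_zero,
      integral_const_mul, valX, mul_zero]
  · nlinarith [mul_pos hB hc]
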